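/- Let ζ(s,a) = Σ_{n≥0} (n+a)^{−s} be the Hurwitz zeta function. Then Σ_{a≥1, a≡1 mod 6} a^{−3} − Σ_{a≥1, a≡5 mod 6} a^{−3} = (1/6³)(ζ(3, 1/6) − ζ(3, 5/6)) = π³/(18√3). -/

import Mathlib

open Real

/-- The Hurwitz zeta function `ζ(s,a) = Σ_{n≥0} (n+a)^{−s}` for real `s`, `a > 0`. -/
noncomputable def hurwitz (s a : ℝ) : ℝ := ∑' n : ℕ, ((n : ℝ) + a) ^ (-s)

lemma sinval (q r : ℕ) (hr : r < 6) :
    Real.sin (2*π*(6*q+r : ℕ)*(1/6)) + Real.sin (2*π*(6*q+r : ℕ)*(1/3))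
      = Real.sqrt 3 * ((if r = 1 then (1:ℝ) else 0) - (if r = 5 then (1:ℝ) else 0)) := by
  have h1 : (2*π*(6*q+r : ℕ)*(1/6) : ℝ) = π*r/3 + q * (2*π) := by push_cast; ring
  have h2 : (2*π*(6*q+r : ℕ)*(1/3) : ℝ) = 2*π*r/3 + ((2*q : ℕ) : ℝ) * (2*π) := by push_cast; ring
  rw [h1, h2, Real.sin_add_nat_mul_two_pi, Real.sin_add_nat_mul_two_pi]
  interval_cases r <;> push_cast
  · simp
  · rw [show (π*1/3 : ℝ) = π/3 by ring, show (2*π*1/3 : ℝ) = π - π/3 by ring,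
      Real.sin_pi_sub, Real.sin_pi_div_three]
    norm_num
  · rw [show (π*2/3 : ℝ) = π - π/3 by ring, show (2*π*2/3 : ℝ) = π/3 + π by ring,
      Real.sin_pi_sub, Real.sin_add_pi]
    norm_num
  · rw [show (π*3/3 : ℝ) = π by ring, show (2*π*3/3 : ℝ) = 0 + (1:ℕ)*(2*π) by push_cast; ring,
      Real.sin_pi, Real.sin_add_nat_mul_two_pi 0 1, Real.sin_zero]
    norm_num
  · rw [show (π*4/3 : ℝ) = π/3 + π by ring,
      show (2*π*4/3 : ℝ) = (π - π/3) + (1:ℕ)*(2*π) by push_cast; ring,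
      Real.sin_add_pi, Real.sin_add_nat_mul_two_pi _ 1, Real.sin_pi_sub]
    norm_num
  · rw [show (π*5/3 : ℝ) = (π - π/3) + π by ring,
      show (2*π*5/3 : ℝ) = (π/3 + π) + (1:ℕ)*(2*π) by push_cast; ring,
      Real.sin_add_pi, Real.sin_add_nat_mul_two_pi _ 1, Real.sin_add_pi, Real.sin_pi_sub,
      Real.sin_pi_div_three]
    norm_num; ring

lemma bern3 (x : ℝ) :
    (Polynomial.map (algebraMap ℚ ℝ) (Polynomial.bernoulli 3)).eval x
      = x^3 - 3/2*x^2 + 1/2*x := by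
  simp [Polynomial.bernoulli, Finset.sum_range_succ, bernoulli]
  ring

lemma key : HasSum (fun n : ℕ =>
    (if n % 6 = 1 then (1:ℝ)/(n:ℝ)^3 else 0) - (if n % 6 = 5 then (1:ℝ)/(n:ℝ)^3 else 0))
    (π^3 / (18 * Real.sqrt 3)) := by
  have h16 := hasSum_one_div_nat_pow_mul_sin (k := 1) one_ne_zero
    (x := 1/6) (by constructor <;> norm_num)
  have h13 := hasSum_one_div_nat_pow_mul_sin (k := 1) one_ne_zero
    (x := 1/3) (by constructor <;> norm_num)
  rw [bern3] at h16 h13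
  have hs3 : (0:ℝ) < Real.sqrt 3 := Real.sqrt_pos.mpr (by norm_num)
  have H := (h16.add h13).div_const (Real.sqrt 3)
  have hval : ((-1:ℝ)^(1+1) * (2*π)^(2*1+1) / 2 / ((Nat.factorial (2*1+1) : ℝ)) * ((1/6)^3 - 3/2*(1/6)^2 + 1/2*(1/6))
      + (-1:ℝ)^(1+1) * (2*π)^(2*1+1) / 2 / ((Nat.factorial (2*1+1) : ℝ)) * ((1/3)^3 - 3/2*(1/3)^2 + 1/2*(1/3)))
      / Real.sqrt 3 = π^3 / (18 * Real.sqrt 3) := by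
    rw [show ((Nat.factorial (2*1+1) : ℝ)) = 6 by norm_num [Nat.factorial]]
    push_cast
    rw [div_eq_div_iff (by positivity) (by positivity)]
    ring
  rw [hval] at H
  convert H using 1
  case e'_3 => exact rfl
  funext n
  obtain ⟨q, r, hr, rfl⟩ : ∃ q r, r < 6 ∧ n = 6*q + r :=
    ⟨n / 6, n % 6, Nat.mod_lt _ (by norm_num), (Nat.div_add_mod n 6).symm⟩
  have hmod : (6*q + r) % 6 = r := by omega
  rw [hmod]
  have := sinval q r hr
  rw [eq_div_iff (ne_of_gt hs3)]
  rw [show (2*1+1) = 3 from rfl]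
  calc ((if r = 1 then (1:ℝ)/((6*q+r : ℕ):ℝ)^3 else 0) - (if r = 5 then (1:ℝ)/((6*q+r : ℕ):ℝ)^3 else 0))
        * Real.sqrt 3
      = (1/((6*q+r : ℕ):ℝ)^3) * (Real.sqrt 3 * ((if r = 1 then (1:ℝ) else 0) - (if r = 5 then (1:ℝ) else 0))) := by
        split_ifs <;> ring
    _ = _ := by rw [← this]; ring

lemma summ_aux (c : ℕ) (hc : 1 ≤ c) : Summable (fun k : ℕ => (1:ℝ)/(6*(k:ℝ)+c)^3) := by
  have hbase : Summable (fun k : ℕ => (1:ℝ)/((k:ℝ)+1)^3) := by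
    have := (summable_nat_add_iff 1).mpr (Real.summable_one_div_nat_pow.mpr (by norm_num : 2 ≤ 3))
    simpa using this
  apply Summable.of_nonneg_of_le (fun k => by positivity) _ hbase
  intro k
  apply one_div_le_one_div_of_le (by positivity)
  have h1 : ((k:ℝ)+1) ≤ 6*(k:ℝ)+c := by
    have : (1:ℝ) ≤ c := by exact_mod_cast hc
    nlinarith [Nat.cast_nonneg (α := ℝ) k]
  have h0 : (0:ℝ) ≤ (k:ℝ)+1 := by positivity
  exact pow_le_pow_left₀ h0 h1 3

lemma hasSumIndicator (c : ℕ) (hc1 : 1 ≤ c) (hc : c < 6) :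
    HasSum (fun n : ℕ => if n % 6 = c then (1:ℝ)/(n:ℝ)^3 else 0)
      (∑' k : ℕ, (1:ℝ)/(6*(k:ℝ)+c)^3) := by
  have hinj : Function.Injective (fun k : ℕ => 6*k+c) := by intro a b h; dsimp only at h; omega
  rw [← Function.Injective.hasSum_iff hinj ?_]
  · have : (fun n : ℕ => if n % 6 = c then (1:ℝ)/(n:ℝ)^3 else 0) ∘ (fun k : ℕ => 6*k+c)
        = fun k : ℕ => (1:ℝ)/(6*(k:ℝ)+c)^3 := by
      funext k
      have : (6*k+c) % 6 = c := by omega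
      simp only [Function.comp_apply, this, if_true]
      push_cast
      ring_nf
    rw [this]
    exact (summ_aux c hc1).hasSum
  · intro n hn
    simp only [Set.mem_range, not_exists] at hn
    have : n % 6 ≠ c := by
      intro h
      exact hn (n/6) (by omega)
    simp [this]

theorem odd_character_L_three :
    (∑' n : ℕ, (1 : ℝ) / (6 * n + 1) ^ 3) - (∑' n : ℕ, (1 : ℝ) / (6 * n + 5) ^ 3)
        = (1 / 6 ^ 3) * (hurwitz 3 (1/6) - hurwitz 3 (5/6))
      ∧ (∑' n : ℕ, (1 : ℝ) / (6 * n + 1) ^ 3) - (∑' n : ℕ, (1 : ℝ) / (6 * n + 5) ^ 3)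
        = π ^ 3 / (18 * Real.sqrt 3) := by
  have h1 := hasSumIndicator 1 le_rfl (by norm_num)
  have h5 := hasSumIndicator 5 (by norm_num) (by norm_num)
  push_cast at h1 h5
  constructor
  · have hur : ∀ c : ℕ, 1 ≤ c → c < 6 → hurwitz 3 ((c:ℝ)/6)
        = 216 * ∑' n : ℕ, (1:ℝ)/(6*(n:ℝ)+c)^3 := by
      intro c hc1 hc
      unfold hurwitz
      rw [← tsum_mul_left]
      apply tsum_congr
      intro n
      have hpos : (0:ℝ) < (n:ℝ) + c/6 := by positivity
      rw [show (-(3:ℝ)) = ((-3 : ℤ) : ℝ) by norm_num, Real.rpow_intCast]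
      rw [show (-3 : ℤ) = -(3:ℕ) by rfl, zpow_neg, zpow_natCast]
      rw [show (6*(n:ℝ)+c) = 6*((n:ℝ)+c/6) by ring, mul_pow, inv_eq_one_div,
        mul_one_div, div_eq_div_iff (by positivity) (by positivity)]
      ring
    have e1 : hurwitz 3 (1/6) = 216 * ∑' n : ℕ, (1:ℝ)/(6*(n:ℝ)+1)^3 := by
      have := hur 1 le_rfl (by norm_num); push_cast at this; simpa using this
    have e5 : hurwitz 3 (5/6) = 216 * ∑' n : ℕ, (1:ℝ)/(6*(n:ℝ)+5)^3 := by
      have := hur 5 (by norm_num) (by norm_num); push_cast at this; simpa using this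
    rw [e1, e5]
    ring
  · exact (h1.sub h5).unique key
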